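/- Soundness of the PiCore rely-guarantee proof system: for every specification ♯ — a program, an event, an event system, or a parallel event system — and all pre, pst ⊆ S and R, G ⊆ S × S, if ⊢ ♯ sat ⟨pre,R,G,pst⟩ is derivable in the proof system, then ⊨ ♯ sat ⟨pre,R,G,pst⟩ holds, i.e., for all initial states s and event contexts x, every computation in Ψ(♯,s,x) ∩ A(pre,R) lies in C(G,pst). -/

import Mathlib

set_option autoImplicit false

namespace PiCore

/-! ## Syntax of PiCore -/

/-- PiCore programs; `term` is the terminated program `⊥`. -/
inductive Prog (S : Type) : Type where
  | term : Prog S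
  | basic : (S → S) → Prog S
  | seq : Prog S → Prog S → Prog S
  | cond : Set S → Prog S → Prog S → Prog S
  | while' : Set S → Prog S → Prog S
  | await : Set S → Prog S → Prog S
  | nondt : Set (S × S) → Prog S

/-! ## Small-step semantics of programs -/

mutual
/-- Small-step program semantics `(P, s) -c→ (P', s')`. -/
inductive PStep {S : Type} : Prog S × S → Prog S × S → Prop where
  | basic (f : S → S) (s : S) : PStep (.basic f, s) (.term, f s)
  | seq1 {P₁ : Prog S} {s s' : S} (P₂ : Prog S) :
      PStep (P₁, s) (.term, s') → PStep (.seq P₁ P₂, s) (P₂, s')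
  | seq2 {P₁ P₁' : Prog S} {s s' : S} (P₂ : Prog S) :
      PStep (P₁, s) (P₁', s') → P₁' ≠ .term → PStep (.seq P₁ P₂, s) (.seq P₁' P₂, s')
  | condT {b : Set S} {s : S} (P₁ P₂ : Prog S) : s ∈ b → PStep (.cond b P₁ P₂, s) (P₁, s)
  | condF {b : Set S} {s : S} (P₁ P₂ : Prog S) : s ∉ b → PStep (.cond b P₁ P₂, s) (P₂, s)
  | whileT {b : Set S} {s : S} (P : Prog S) : s ∈ b →
      PStep (.while' b P, s) (.seq P (.while' b P), s)
  | whileF {b : Set S} {s : S} (P : Prog S) : s ∉ b → PStep (.while' b P, s) (.term, s)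
  | await {b : Set S} {s s' : S} {P : Prog S} : s ∈ b →
      PStepStar (P, s) (.term, s') → PStep (.await b P, s) (.term, s')
  | nondt {r : Set (S × S)} {s s' : S} : (s, s') ∈ r → PStep (.nondt r, s) (.term, s')

/-- Reflexive transitive closure of `PStep`. -/
inductive PStepStar {S : Type} : Prog S × S → Prog S × S → Prop where
  | refl (c : Prog S × S) : PStepStar c c
  | step {c c' c'' : Prog S × S} : PStep c c' → PStepStar c' c'' → PStepStar c c''
end

/-! ## Events, event systems, parallel event systems -/

/-- A basic event: a label, a guard and a body. -/
structure EvtSpec (L S : Type) : Type where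
  label : L
  guard : Set S
  body : Prog S

/-- Events: basic (non-triggered) events and anonymous (triggered) events. -/
inductive Event (L S : Type) : Type where
  | basic : EvtSpec L S → Event L S
  | anony : Prog S → Event L S

/-- Event contexts. -/
abbrev EvtCtx (L S K : Type) := K → Event L S

/-- The action component of a transition label: a program action `c`
or the occurrence of an event. -/
inductive Act (L S : Type) : Type where
  | cmd : Act L S
  | evt : Event L S → Act L S

/-- Transition labels `t@κ`. -/
abbrev Lbl (L S K : Type) := Act L S × K

/-- Configurations at the level of events. -/
abbrev EConf (L S K : Type) := Event L S × S × EvtCtx L S K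

/-- Labelled transitions of events. -/
inductive EStep {L S K : Type} [DecidableEq K] :
    EConf L S K → Lbl L S K → EConf L S K → Prop where
  | anony {P P' : Prog S} {s s' : S} (x : EvtCtx L S K) (κ : K) :
      PStep (P, s) (P', s') → EStep (.anony P, s, x) (.cmd, κ) (.anony P', s', x)
  | basic (α : EvtSpec L S) {s : S} (x : EvtCtx L S K) (κ : K) : s ∈ α.guard →
      EStep (.basic α, s, x) (.evt (.basic α), κ)
        (.anony α.body, s, Function.update x κ (.basic α))

/-- Event systems: a finite event set `{ℰ₀, …, ℰₙ}` or a sequence `EvtSeq ℰ 𝒮`. -/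
inductive EvtSys (L S : Type) : Type where
  | set : (n : ℕ) → (Fin (n + 1) → Event L S) → EvtSys L S
  | seq : Event L S → EvtSys L S → EvtSys L S

/-- Configurations at the level of event systems. -/
abbrev ESConf (L S K : Type) := EvtSys L S × S × EvtCtx L S K

/-- Labelled transitions of event systems. -/
inductive ESStep {L S K : Type} [DecidableEq K] :
    ESConf L S K → Lbl L S K → ESConf L S K → Prop where
  | set {n : ℕ} {es : Fin (n + 1) → Event L S} (i : Fin (n + 1))
      {s s' : S} {x x' : EvtCtx L S K} {e' : Event L S} {κ : K} :
      EStep (es i, s, x) (.evt (es i), κ) (e', s', x') →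
      ESStep (.set n es, s, x) (.evt (es i), κ) (.seq e' (.set n es), s', x')
  | seq1 {e e' : Event L S} (𝒮 : EvtSys L S) {s s' : S} {x x' : EvtCtx L S K}
      {l : Lbl L S K} :
      EStep (e, s, x) l (e', s', x') → e' ≠ .anony .term →
      ESStep (.seq e 𝒮, s, x) l (.seq e' 𝒮, s', x')
  | seq2 {e : Event L S} (𝒮 : EvtSys L S) {s s' : S} {x x' : EvtCtx L S K}
      {l : Lbl L S K} :
      EStep (e, s, x) l (.anony .term, s', x') →
      ESStep (.seq e 𝒮, s, x) l (𝒮, s', x')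

/-- Parallel event systems. -/
abbrev PES (L S K : Type) := K → EvtSys L S

/-- Configurations at the level of parallel event systems. -/
abbrev PConf (L S K : Type) := PES L S K × S × EvtCtx L S K

/-- Labelled transitions of parallel event systems. -/
inductive PESStep {L S K : Type} [DecidableEq K] :
    PConf L S K → Lbl L S K → PConf L S K → Prop where
  | par {ps : PES L S K} {κ : K} {t : Act L S} {s s' : S} {x x' : EvtCtx L S K}
      {es' : EvtSys L S} :
      ESStep (ps κ, s, x) (t, κ) (es', s', x') →
      PESStep (ps, s, x) (t, κ) (Function.update ps κ es', s', x')

/-! ## Computations -/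

section Computation

variable {σ S X : Type}

/-- An environment transition between two configurations:
the specification component is unchanged. -/
def EnvTr (c c' : σ × S × X) : Prop := c.1 = c'.1

/-- Computations: nonempty lists of configurations in which every consecutive pair
is an environment transition or an action transition of the semantics. -/
inductive Comp (step : σ × S × X → σ × S × X → Prop) : List (σ × S × X) → Prop where
  | one (c : σ × S × X) : Comp step [c]
  | env {sp : σ} {s₁ s₂ : S} {x₁ x₂ : X} {cs : List (σ × S × X)} :
      Comp step ((sp, s₁, x₁) :: cs) → Comp step ((sp, s₂, x₂) :: (sp, s₁, x₁) :: cs)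
  | act {c c' : σ × S × X} {cs : List (σ × S × X)} :
      step c c' → Comp step (c' :: cs) → Comp step (c :: c' :: cs)

/-- `Ψ(♯, s, x)`: the computations starting in the configuration `(♯, s, x)`. -/
def cpts (step : σ × S × X → σ × S × X → Prop) (sp : σ) (s : S) (x : X) :
    Set (List (σ × S × X)) :=
  {ϖ | Comp step ϖ ∧ ϖ.head? = some (sp, s, x)}

/-- The assumption `A(pre, R)`. -/
def Assum (pre : Set S) (R : Set (S × S)) : Set (List (σ × S × X)) :=
  {ϖ | (∀ c, ϖ.head? = some c → c.2.1 ∈ pre) ∧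
    ∀ i c c', ϖ[i]? = some c → ϖ[i + 1]? = some c' → EnvTr c c' →
      (c.2.1, c'.2.1) ∈ R}

/-- The commitment `C(G, pst)` (`fin` tells when a specification is terminated). -/
def Commit (step : σ × S × X → σ × S × X → Prop) (fin : σ → Prop)
    (G : Set (S × S)) (pst : Set S) : Set (List (σ × S × X)) :=
  {ϖ | (∀ i c c', ϖ[i]? = some c → ϖ[i + 1]? = some c' → step c c' →
      (c.2.1, c'.2.1) ∈ G) ∧
    ∀ c, ϖ.getLast? = some c → fin c.1 → c.2.1 ∈ pst}

end Computation

/-! ## Validity of rely-guarantee specifications -/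

section Validity

variable {L S K : Type}

/-- Program action transitions lifted to configurations with a trivial event context. -/
def pstepL {S : Type} (c c' : Prog S × S × Unit) : Prop :=
  PStep (c.1, c.2.1) (c'.1, c'.2.1)

/-- Action transitions of events (any label). -/
def estepAny [DecidableEq K] (c c' : EConf L S K) : Prop := ∃ l, EStep c l c'

/-- Action transitions of event systems (any label). -/
def esstepAny [DecidableEq K] (c c' : ESConf L S K) : Prop := ∃ l, ESStep c l c'

/-- Action transitions of parallel event systems (any label). -/
def pesstepAny [DecidableEq K] (c c' : PConf L S K) : Prop := ∃ l, PESStep c l c'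

/-- A terminated program. -/
def progFin : Prog S → Prop := fun P => P = .term

/-- A terminated event. -/
def evtFin : Event L S → Prop := fun e => e = .anony .term

/-- Event systems have no terminated form. -/
def esysFin : EvtSys L S → Prop := fun _ => False

/-- Parallel event systems have no terminated form. -/
def pesFin : PES L S K → Prop := fun _ => False

/-- Validity `⊨ P sat ⟨pre, R, G, pst⟩` for programs. -/
def progValid (P : Prog S) (pre : Set S) (R G : Set (S × S)) (pst : Set S) : Prop :=
  ∀ s : S, cpts pstepL P s () ∩ Assum pre R ⊆ Commit pstepL progFin G pst

/-- Validity `⊨ ℰ sat ⟨pre, R, G, pst⟩` for events. -/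
def evtValid [DecidableEq K] (e : Event L S) (pre : Set S) (R G : Set (S × S))
    (pst : Set S) : Prop :=
  ∀ (s : S) (x : EvtCtx L S K),
    cpts estepAny e s x ∩ Assum pre R ⊆ Commit estepAny evtFin G pst

/-- Validity `⊨ 𝒮 sat ⟨pre, R, G, pst⟩` for event systems. -/
def esysValid [DecidableEq K] (es : EvtSys L S) (pre : Set S) (R G : Set (S × S))
    (pst : Set S) : Prop :=
  ∀ (s : S) (x : EvtCtx L S K),
    cpts esstepAny es s x ∩ Assum pre R ⊆ Commit esstepAny esysFin G pst

/-- Validity `⊨ 𝒫𝒮 sat ⟨pre, R, G, pst⟩` for parallel event systems. -/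
def pesValid [DecidableEq K] (ps : PES L S K) (pre : Set S) (R G : Set (S × S))
    (pst : Set S) : Prop :=
  ∀ (s : S) (x : EvtCtx L S K),
    cpts pesstepAny ps s x ∩ Assum pre R ⊆ Commit pesstepAny pesFin G pst

end Validity

/-! ## The rely-guarantee proof system -/

/-- Specifications: programs, events, event systems, or parallel event systems. -/
inductive Spec (L S K : Type) : Type where
  | prog : Prog S → Spec L S K
  | evt : Event L S → Spec L S K
  | esys : EvtSys L S → Spec L S K
  | pes : PES L S K → Spec L S K

/-- A specification that is not a parallel event system. -/
def Spec.noPar {L S K : Type} : Spec L S K → Prop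
  | .pes _ => False
  | _ => True

/-- Uniform validity `⊨ ♯ sat ⟨pre, R, G, pst⟩`. -/
def RGValid {L S K : Type} [DecidableEq K] :
    Spec L S K → Set S → Set (S × S) → Set (S × S) → Set S → Prop
  | .prog P, pre, R, G, pst => progValid P pre R G pst
  | .evt e, pre, R, G, pst => evtValid (K := K) e pre R G pst
  | .esys es, pre, R, G, pst => esysValid (K := K) es pre R G pst
  | .pes ps, pre, R, G, pst => pesValid ps pre R G pst

/-- `stable f g`. -/
def stable {α : Type} (f : Set α) (g : Set (α × α)) : Prop :=
  ∀ x y, x ∈ f → (x, y) ∈ g → y ∈ f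

/-- The identity relation on a state space. -/
def idRel {S : Type} : Set (S × S) := {p | p.1 = p.2}

/-- The rely-guarantee proof system `⊢ ♯ sat ⟨pre, R, G, pst⟩`. -/
inductive RGDeriv {L S K : Type} [DecidableEq K] :
    Spec L S K → Set S → Set (S × S) → Set (S × S) → Set S → Prop where
  | basic {f : S → S} {pre pst : Set S} {R G : Set (S × S)} :
      pre ⊆ {s | f s ∈ pst} →
      {p : S × S | p.1 ∈ pre ∧ p.2 = f p.1} ⊆ G →
      stable pre R → stable pst R →
      RGDeriv (.prog (.basic f)) pre R G pst
  | seq {P Q : Prog S} {pre m pst : Set S} {R G : Set (S × S)} :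
      RGDeriv (.prog P) pre R G m → RGDeriv (.prog Q) m R G pst →
      RGDeriv (.prog (.seq P Q)) pre R G pst
  | cond {b : Set S} {P₁ P₂ : Prog S} {pre pst : Set S} {R G : Set (S × S)} :
      RGDeriv (.prog P₁) (pre ∩ b) R G pst →
      RGDeriv (.prog P₂) (pre ∩ bᶜ) R G pst →
      stable pre R → idRel ⊆ G →
      RGDeriv (.prog (.cond b P₁ P₂)) pre R G pst
  | whileR {b : Set S} {P : Prog S} {pre pst : Set S} {R G : Set (S × S)} :
      RGDeriv (.prog P) (pre ∩ b) R G pre →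
      pre ∩ bᶜ ⊆ pst →
      stable pre R → stable pst R → idRel ⊆ G →
      RGDeriv (.prog (.while' b P)) pre R G pst
  | awaitR {b : Set S} {P : Prog S} {pre pst : Set S} {R G : Set (S × S)} :
      (∀ V : S, RGDeriv (.prog P) (pre ∩ b ∩ {V}) idRel Set.univ
        ({s | (V, s) ∈ G} ∩ pst)) →
      stable pre R → stable pst R →
      RGDeriv (.prog (.await b P)) pre R G pst
  | nondt {r : Set (S × S)} {pre pst : Set S} {R G : Set (S × S)} :
      pre ⊆ {s | (∀ s', (s, s') ∈ r → s' ∈ pst) ∧ ∃ s', (s, s') ∈ r} →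
      {p : S × S | p.1 ∈ pre ∧ p ∈ r} ⊆ G →
      stable pre R → stable pst R →
      RGDeriv (.prog (.nondt r)) pre R G pst
  | conseq {sp : Spec L S K} {pre pre' pst pst' : Set S} {R R' G G' : Set (S × S)} :
      sp.noPar →
      pre ⊆ pre' → R ⊆ R' → G' ⊆ G → pst' ⊆ pst →
      RGDeriv sp pre' R' G' pst' →
      RGDeriv sp pre R G pst
  | unPre {P : Prog S} {pre pre' pst : Set S} {R G : Set (S × S)} :
      RGDeriv (.prog P) pre R G pst → RGDeriv (.prog P) pre' R G pst →
      RGDeriv (.prog P) (pre ∪ pre') R G pst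
  | intPost {P : Prog S} {pre pst pst' : Set S} {R G : Set (S × S)} :
      RGDeriv (.prog P) pre R G pst → RGDeriv (.prog P) pre R G pst' →
      RGDeriv (.prog P) pre R G (pst ∩ pst')
  | univPre {P : Prog S} {pre pst : Set S} {R G : Set (S × S)} :
      (∀ v ∈ pre, RGDeriv (.prog P) {v} R G pst) →
      RGDeriv (.prog P) pre R G pst
  | emptyPre {P : Prog S} {pst : Set S} {R G : Set (S × S)} :
      RGDeriv (.prog P) ∅ R G pst
  | inner {P : Prog S} {pre pst : Set S} {R G : Set (S × S)} :
      RGDeriv (.prog P) pre R G pst →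
      RGDeriv (.evt (.anony P)) pre R G pst
  | basicEvt {α : EvtSpec L S} {pre pst : Set S} {R G : Set (S × S)} :
      RGDeriv (.prog α.body) (pre ∩ α.guard) R G pst →
      stable pre R → idRel ⊆ G →
      RGDeriv (.evt (.basic α)) pre R G pst
  | evtSeq {e : Event L S} {𝒮 : EvtSys L S} {pre m pst : Set S} {R G : Set (S × S)} :
      RGDeriv (.evt e) pre R G m → RGDeriv (.esys 𝒮) m R G pst →
      RGDeriv (.esys (.seq e 𝒮)) pre R G pst
  | evtSet {n : ℕ} {es : Fin (n + 1) → Event L S} {pre pst : Set S}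
      {R G : Set (S × S)} {pres psts : Fin (n + 1) → Set S}
      {Rs Gs : Fin (n + 1) → Set (S × S)} :
      (∀ i, RGDeriv (.evt (es i)) (pres i) (Rs i) (Gs i) (psts i)) →
      (∀ i j, psts i ⊆ pres j) →
      (∀ i, pre ⊆ pres i) → (∀ i, psts i ⊆ pst) →
      (∀ i, R ⊆ Rs i) → (∀ i, Gs i ⊆ G) →
      stable pre R → idRel ⊆ G →
      RGDeriv (.esys (.set n es)) pre R G pst
  | par {ps : PES L S K} {pre pst : Set S} {R G : Set (S × S)}
      {pres psts : K → Set S} {Rs Gs : K → Set (S × S)} :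
      (∀ κ, RGDeriv (.esys (ps κ)) (pres κ) (Rs κ) (Gs κ) (psts κ)) →
      (∀ κ, pre ⊆ pres κ) → (∀ κ, psts κ ⊆ pst) →
      (∀ κ, Gs κ ⊆ G) → (∀ κ, R ⊆ Rs κ) →
      (∀ κ κ', κ ≠ κ' → Gs κ ⊆ Rs κ') →
      RGDeriv (.pes ps) pre R G pst


/-! ## Serialization and compositionality machinery -/

/-- The set of events occurring syntactically in an event system. -/
def EvtSys.evts {L S : Type} : EvtSys L S → Set (Event L S)
  | .set _ es => Set.range es
  | .seq e 𝒮 => insert e 𝒮.evts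

/-- Similarity (simulation) of two computations, possibly over different
specification types: same length, and at each position the states and event
contexts coincide and the steps are the same labelled action transitions
(resp. environment transitions). -/
def Similar {σ₁ σ₂ S X Λ : Type}
    (st₁ : σ₁ × S × X → Λ → σ₁ × S × X → Prop)
    (st₂ : σ₂ × S × X → Λ → σ₂ × S × X → Prop)
    (w₁ : List (σ₁ × S × X)) (w₂ : List (σ₂ × S × X)) : Prop :=
  w₁.length = w₂.length ∧
  ∀ i c₁ c₁' c₂ c₂', w₁[i]? = some c₁ → w₁[i + 1]? = some c₁' →
    w₂[i]? = some c₂ → w₂[i + 1]? = some c₂' →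
    c₁.2.1 = c₂.2.1 ∧ c₁.2.2 = c₂.2.2 ∧
    (∀ δ, st₁ c₁ δ c₁' ↔ st₂ c₂ δ c₂') ∧
    (EnvTr c₁ c₁' ↔ EnvTr c₂ c₂')

/-- The computations of an event (from an arbitrary initial state and
event context). -/
def cptsOfEvt {L S K : Type} [DecidableEq K] (e : Event L S) :
    Set (List (EConf L S K)) :=
  {w | Comp estepAny w ∧ ∃ s x, w.head? = some (e, s, x)}

/-- A computation `w` of a parallel event system and a family `cf` of
computations of event systems conjoin, `w ∝ cf` (Definition 2). -/
def Conjoin {L S K : Type} [DecidableEq K] (w : List (PConf L S K))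
    (cf : K → List (ESConf L S K)) : Prop :=
  (∀ κ, (cf κ).length = w.length) ∧
  (∀ (κ : K) (j : ℕ) c c', w[j]? = some c → (cf κ)[j]? = some c' →
    c.2.1 = c'.2.1 ∧ c.2.2 = c'.2.2 ∧ c.1 κ = c'.1) ∧
  (∀ (j : ℕ) c c', w[j]? = some c → w[j + 1]? = some c' →
    (EnvTr c c' ∧
      ∀ κ d d', (cf κ)[j]? = some d → (cf κ)[j + 1]? = some d' → EnvTr d d') ∨
    (∃ (t : Act L S) (κ₁ : K), PESStep c (t, κ₁) c' ∧
      (∀ d d', (cf κ₁)[j]? = some d → (cf κ₁)[j + 1]? = some d' →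
        ESStep d (t, κ₁) d') ∧
      (∀ κ, κ ≠ κ₁ → ∀ d d', (cf κ)[j]? = some d → (cf κ)[j + 1]? = some d' →
        EnvTr d d')))

/-! ### Auxiliary: steps change the specification -/

section NeLemmas
variable {S : Type}

theorem prog_seq_ne (P₁ P₂ : Prog S) : Prog.seq P₁ P₂ ≠ P₂ := by
  induction P₂ generalizing P₁ with
  | seq Q₁ Q₂ ih₁ ih₂ =>
    intro h; injection h with h1 h2; exact ih₂ Q₁ h2
  | _ => intro h; cases h

theorem prog_cond_ne₁ (b : Set S) (P₁ P₂ : Prog S) : Prog.cond b P₁ P₂ ≠ P₁ := by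
  induction P₁ generalizing b P₂ with
  | cond b' Q₁ Q₂ ih₁ ih₂ =>
    intro h; injection h with h0 h1 h2; exact ih₁ b' Q₂ h1
  | _ => intro h; cases h

theorem prog_cond_ne₂ (b : Set S) (P₁ P₂ : Prog S) : Prog.cond b P₁ P₂ ≠ P₂ := by
  induction P₂ generalizing b P₁ with
  | cond b' Q₁ Q₂ ih₁ ih₂ =>
    intro h; injection h with h0 h1 h2; exact ih₂ b' Q₁ h2
  | _ => intro h; cases h

theorem pstep_ne : ∀ {P : Prog S} {s : S} {P' : Prog S} {s' : S},
    PStep (P, s) (P', s') → P ≠ P' := by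
  intro P
  induction P with
  | term => intro s P' s' h; cases h
  | basic f => intro s P' s' h; cases h; exact fun h => nomatch h
  | seq P₁ P₂ ih₁ ih₂ =>
    intro s P' s' h
    cases h with
    | seq1 _ h1 => exact prog_seq_ne P₁ P₂
    | seq2 _ h1 hne =>
      intro h; injection h with ha hb; exact ih₁ h1 ha
  | cond b P₁ P₂ ih₁ ih₂ =>
    intro s P' s' h
    cases h with
    | condT _ _ hb => exact prog_cond_ne₁ b P₁ P₂
    | condF _ _ hb => exact prog_cond_ne₂ b P₁ P₂
  | while' b P ih =>
    intro s P' s' h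
    cases h with
    | whileT _ hb => exact fun h => nomatch h
    | whileF _ hb => exact fun h => nomatch h
  | await b P ih =>
    intro s P' s' h; cases h; exact fun h => nomatch h
  | nondt r => intro s P' s' h; cases h; exact fun h => nomatch h

theorem no_pstep_term {s : S} {c : Prog S × S} : ¬ PStep (Prog.term, s) c := by
  intro h; cases h

variable {L K : Type} [DecidableEq K]

theorem estep_ne {c c' : EConf L S K} {l : Lbl L S K} (h : EStep c l c') :
    c.1 ≠ c'.1 := by
  cases h with
  | anony _ _ hp => intro h; injection h with h1; exact pstep_ne hp h1
  | basic _ _ _ hg => intro h; cases h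

theorem no_estep_term {s : S} {x : EvtCtx L S K} {l : Lbl L S K} {c : EConf L S K} :
    ¬ EStep (Event.anony Prog.term, s, x) l c := by
  intro h; cases h with
  | anony _ _ hp => exact no_pstep_term hp

theorem evtsys_seq_ne (e : Event L S) (𝒮 : EvtSys L S) : EvtSys.seq e 𝒮 ≠ 𝒮 := by
  induction 𝒮 generalizing e with
  | set n es => intro h; cases h
  | seq e' 𝒮' ih => intro h; injection h with h1 h2; exact ih e' h2

theorem esstep_ne {c c' : ESConf L S K} {l : Lbl L S K} (h : ESStep c l c') :
    c.1 ≠ c'.1 := by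
  cases h with
  | set i he => intro h; cases h
  | seq1 _ he hne => intro h; injection h with h1 h2; exact estep_ne he h1
  | seq2 _ he => intro h; exact evtsys_seq_ne _ _ h

theorem pesstep_ne {c c' : PConf L S K} {l : Lbl L S K} (h : PESStep c l c') :
    c.1 ≠ c'.1 := by
  cases h with
  | par hes =>
    intro h
    rename_i ps κ t s s' x x' es'
    have : ps κ = es' := by
      have := congrFun h κ
      simpa using this
    exact esstep_ne hes this

end NeLemmas
/-! ### Auxiliary: computation predicates -/

section CompLemmas
variable {σ S X : Type} {step : σ × S × X → σ × S × X → Prop}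

/-- All environment transitions lie in `R`. -/
def rely (R : Set (S × S)) (w : List (σ × S × X)) : Prop :=
  ∀ i c c', w[i]? = some c → w[i + 1]? = some c' → EnvTr c c' → (c.2.1, c'.2.1) ∈ R

/-- All action transitions lie in `G`. -/
def guarOf (step : σ × S × X → σ × S × X → Prop) (G : Set (S × S))
    (w : List (σ × S × X)) : Prop :=
  ∀ i c c', w[i]? = some c → w[i + 1]? = some c' → step c c' → (c.2.1, c'.2.1) ∈ G

/-- The final state is in `pst` when the final specification is terminated. -/
def postOf (fin : σ → Prop) (pst : Set S) (w : List (σ × S × X)) : Prop :=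
  ∀ c, w.getLast? = some c → fin c.1 → c.2.1 ∈ pst

theorem rely_one {R : Set (S × S)} {c : σ × S × X} : rely R [c] := by
  intro i a b ha hb; simp at hb

theorem guar_one {G : Set (S × S)} {c : σ × S × X} : guarOf step G [c] := by
  intro i a b ha hb; simp at hb

theorem rely_tail {R : Set (S × S)} {c : σ × S × X} {w : List (σ × S × X)}
    (h : rely R (c :: w)) : rely R w := by
  intro i a b ha hb he
  exact h (i + 1) a b (by simpa using ha) (by simpa using hb) he

theorem guar_tail {G : Set (S × S)} {c : σ × S × X} {w : List (σ × S × X)}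
    (h : guarOf step G (c :: w)) : guarOf step G w := by
  intro i a b ha hb he
  exact h (i + 1) a b (by simpa using ha) (by simpa using hb) he

theorem rely_head {R : Set (S × S)} {c c' : σ × S × X} {w : List (σ × S × X)}
    (h : rely R (c :: c' :: w)) (he : EnvTr c c') : (c.2.1, c'.2.1) ∈ R :=
  h 0 c c' (by simp) (by simp) he

theorem rely_cons {R : Set (S × S)} {c c' : σ × S × X} {w : List (σ × S × X)}
    (h0 : EnvTr c c' → (c.2.1, c'.2.1) ∈ R) (h : rely R (c' :: w)) :
    rely R (c :: c' :: w) := by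
  intro i a b ha hb he
  cases i with
  | zero =>
    simp at ha hb; subst ha; subst hb; exact h0 he
  | succ i => exact h i a b (by simpa using ha) (by simpa using hb) he

theorem guar_cons {G : Set (S × S)} {c c' : σ × S × X} {w : List (σ × S × X)}
    (h0 : step c c' → (c.2.1, c'.2.1) ∈ G) (h : guarOf step G (c' :: w)) :
    guarOf step G (c :: c' :: w) := by
  intro i a b ha hb he
  cases i with
  | zero =>
    simp at ha hb; subst ha; subst hb; exact h0 he
  | succ i => exact h i a b (by simpa using ha) (by simpa using hb) he

theorem post_one {fin : σ → Prop} {pst : Set S} {c : σ × S × X}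
    (h : fin c.1 → c.2.1 ∈ pst) : postOf fin pst [c] := by
  intro a ha hf
  simp [List.getLast?] at ha; subst ha; exact h hf

theorem post_cons {fin : σ → Prop} {pst : Set S} {c c' : σ × S × X}
    {w : List (σ × S × X)} (h : postOf fin pst (c' :: w)) :
    postOf fin pst (c :: c' :: w) := by
  intro a ha hf
  rw [List.getLast?_cons_cons] at ha
  exact h a ha hf

theorem post_tail {fin : σ → Prop} {pst : Set S} {c c' : σ × S × X}
    {w : List (σ × S × X)} (h : postOf fin pst (c :: c' :: w)) :
    postOf fin pst (c' :: w) := by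
  intro a ha hf
  exact h a (by rw [List.getLast?_cons_cons]; exact ha) hf

theorem comp_pairs {w : List (σ × S × X)} (h : Comp step w) :
    ∀ i c c', w[i]? = some c → w[i + 1]? = some c' → EnvTr c c' ∨ step c c' := by
  induction h with
  | one c => intro i a b ha hb; simp at hb
  | env h ih =>
    intro i a b ha hb
    cases i with
    | zero =>
      simp at ha hb; subst ha; subst hb; exact Or.inl rfl
    | succ i => exact ih i a b (by simpa using ha) (by simpa using hb)
  | act hs h ih =>
    intro i a b ha hb
    cases i with
    | zero =>
      simp at ha hb; subst ha; subst hb; exact Or.inr hs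
    | succ i => exact ih i a b (by simpa using ha) (by simpa using hb)

theorem comp_take {w : List (σ × S × X)} (h : Comp step w) :
    ∀ n, Comp step (w.take (n + 1)) := by
  induction h with
  | one c => intro n; simpa using Comp.one c
  | env h ih =>
    intro n
    cases n with
    | zero => exact Comp.one _
    | succ m =>
      have := ih m
      rw [List.take_succ_cons] at this ⊢
      rw [List.take_succ_cons]
      exact Comp.env this
  | act hs h ih =>
    intro n
    cases n with
    | zero => exact Comp.one _
    | succ m =>
      have := ih m
      rw [List.take_succ_cons] at this ⊢
      exact Comp.act hs this

end CompLemmas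
/-! ### The validity invariant -/

section VLemmas
variable {σ S X : Type}

/-- Validity from a given configuration. -/
def V (step : σ × S × X → σ × S × X → Prop) (fin : σ → Prop)
    (sp : σ) (s : S) (x : X) (R G : Set (S × S)) (pst : Set S) : Prop :=
  ∀ w, Comp step w → w.head? = some (sp, s, x) → rely R w →
    guarOf step G w ∧ postOf fin pst w

variable {step : σ × S × X → σ × S × X → Prop} {fin : σ → Prop}
  {sp sp' : σ} {s s' : S} {x x' : X} {R G : Set (S × S)} {pst : Set S}

theorem V_env (h : V step fin sp s x R G pst) (hR : (s, s') ∈ R) :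
    V step fin sp s' x' R G pst := by
  intro w hc hh hr
  match w, hh with
  | _ :: t, rfl =>
  have hc2 : Comp step ((sp, s, x) :: (sp, s', x') :: t) := Comp.env hc
  have hr2 : rely R ((sp, s, x) :: (sp, s', x') :: t) :=
    rely_cons (fun _ => hR) hr
  have := h _ hc2 rfl hr2
  exact ⟨guar_tail this.1, post_tail this.2⟩

theorem V_step (h : V step fin sp s x R G pst)
    (hs : step (sp, s, x) (sp', s', x')) (hne : sp ≠ sp') :
    V step fin sp' s' x' R G pst := by
  intro w hc hh hr
  match w, hh with
  | _ :: t, rfl =>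
  have hc2 : Comp step ((sp, s, x) :: (sp', s', x') :: t) := Comp.act hs hc
  have hr2 : rely R ((sp, s, x) :: (sp', s', x') :: t) :=
    rely_cons (fun he => absurd he hne) hr
  have := h _ hc2 rfl hr2
  exact ⟨guar_tail this.1, post_tail this.2⟩

theorem V_G (h : V step fin sp s x R G pst)
    (hs : step (sp, s, x) (sp', s', x')) (hne : sp ≠ sp') : (s, s') ∈ G := by
  have := h [(sp, s, x), (sp', s', x')] (Comp.act hs (Comp.one _)) rfl
    (rely_cons (fun he => absurd he hne) rely_one)
  exact this.1 0 _ _ (by simp) (by simp) hs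

theorem V_post_step (h : V step fin sp s x R G pst)
    (hs : step (sp, s, x) (sp', s', x')) (hne : sp ≠ sp') (hf : fin sp') :
    s' ∈ pst := by
  have := h [(sp, s, x), (sp', s', x')] (Comp.act hs (Comp.one _)) rfl
    (rely_cons (fun he => absurd he hne) rely_one)
  exact this.2 (sp', s', x') (by simp) hf

theorem V_sing (h : V step fin sp s x R G pst) (hf : fin sp) : s ∈ pst := by
  have := h [(sp, s, x)] (Comp.one _) rfl rely_one
  exact this.2 (sp, s, x) (by simp) hf

theorem V_mono {R' G' : Set (S × S)} {pst' : Set S}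
    (h : V step fin sp s x R' G' pst')
    (hR : R ⊆ R') (hG : G' ⊆ G) (hpst : pst' ⊆ pst) :
    V step fin sp s x R G pst := by
  intro w hc hh hr
  have := h w hc hh (fun i c c' hi hi' he => hR (hr i c c' hi hi' he))
  exact ⟨fun i c c' hi hi' hs => hG (this.1 i c c' hi hi' hs),
    fun c hl hf => hpst (this.2 c hl hf)⟩

/-- Terminal specifications with no outgoing steps stay in a stable postcondition. -/
theorem V_terminal (hns : ∀ (t : S) (y : X) c, ¬ step (sp, t, y) c)
    (hst : stable pst R) :
    ∀ w, Comp step w → ∀ t y, w.head? = some (sp, t, y) → t ∈ pst → rely R w →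
      guarOf step G w ∧ postOf fin pst w := by
  intro w hc
  induction hc with
  | one c =>
    intro t y hh ht hr
    simp at hh; subst hh
    exact ⟨guar_one, post_one (fun _ => ht)⟩
  | @env sp' s₁ s₂ x₁ x₂ cs h ih =>
    intro t y hh ht hr
    simp at hh
    obtain ⟨h1, h2, h3⟩ := hh; subst h1; subst h2; subst h3
    have hR := rely_head hr rfl
    have ih' := ih s₁ x₁ rfl (hst _ _ ht hR) (rely_tail hr)
    exact ⟨guar_cons (fun hs => absurd hs (hns _ _ _)) ih'.1, post_cons ih'.2⟩
  | @act c c' cs hs h ih =>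
    intro t y hh ht hr
    simp at hh; subst hh
    exact absurd hs (hns _ _ _)

theorem V_terminal' (hns : ∀ (t : S) (y : X) c, ¬ step (sp, t, y) c)
    (hst : stable pst R) (ht : s ∈ pst) : V step fin sp s x R G pst :=
  fun w hc hh hr => V_terminal hns hst w hc s x hh ht hr

end VLemmas
/-! ### Bridges between `V` and set-based validity -/

section Bridges
variable {σ S X : Type} {step : σ × S × X → σ × S × X → Prop} {fin : σ → Prop}
  {sp : σ} {pre pst : Set S} {R G : Set (S × S)}

theorem V_to_valid (h : ∀ (s : S) (x : X), s ∈ pre → V step fin sp s x R G pst) :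
    ∀ (s : S) (x : X), cpts step sp s x ∩ Assum pre R ⊆ Commit step fin G pst := by
  rintro s x w ⟨⟨hc, hh⟩, hpre, henv⟩
  have hs : s ∈ pre := hpre (sp, s, x) hh
  exact h s x hs w hc hh henv

theorem valid_to_V
    (h : ∀ (s : S) (x : X), cpts step sp s x ∩ Assum pre R ⊆ Commit step fin G pst) :
    ∀ (s : S) (x : X), s ∈ pre → V step fin sp s x R G pst := by
  intro s x hs w hc hh hr
  have hw : w ∈ cpts step sp s x ∩ Assum pre R := by
    refine ⟨⟨hc, hh⟩, ?_, hr⟩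
    intro c hc'
    rw [hh] at hc'
    injection hc' with h'
    subst h'; exact hs
  exact h s x hw

end Bridges

section ProgBridge
variable {S : Type} {P : Prog S} {pre pst : Set S} {R G : Set (S × S)}

theorem progV_to_valid (h : ∀ s : S, s ∈ pre → V pstepL progFin P s () R G pst) :
    progValid P pre R G pst := by
  intro s
  exact V_to_valid (fun s (x : Unit) hs => h s hs) s ()

theorem progValid_to_V (h : progValid P pre R G pst) :
    ∀ s : S, s ∈ pre → V pstepL progFin P s () R G pst := by
  intro s hs
  exact valid_to_V (fun s (_ : Unit) => h s) s () hs

end ProgBridge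
/-! ### Soundness of the program rules -/

section ProgRules
variable {S : Type} {pre pst : Set S} {R G : Set (S × S)}

theorem no_pstepL_term : ∀ (t : S) (y : Unit) (c : Prog S × S × Unit),
    ¬ pstepL (Prog.term, t, y) c := fun _ _ _ h => no_pstep_term h

theorem V_term (hst : stable pst R) {t : S} (ht : t ∈ pst) :
    V pstepL progFin (Prog.term (S := S)) t () R G pst :=
  V_terminal' no_pstepL_term hst ht

theorem sound_basic {f : S → S}
    (h1 : pre ⊆ {s | f s ∈ pst})
    (h2 : {p : S × S | p.1 ∈ pre ∧ p.2 = f p.1} ⊆ G)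
    (h3 : stable pre R) (h4 : stable pst R) :
    ∀ s : S, s ∈ pre → V pstepL progFin (Prog.basic f) s () R G pst := by
  intro s hs
  suffices h : ∀ w, Comp pstepL w → ∀ s : S, s ∈ pre →
      w.head? = some (.basic f, s, ()) → rely R w →
      guarOf pstepL G w ∧ postOf progFin pst w by
    intro w hc hh hr; exact h w hc s hs hh hr
  intro w hc
  induction hc with
  | one c =>
    intro s hs hh hr
    simp at hh; subst hh
    exact ⟨guar_one, post_one (fun hf => absurd hf (by simp [progFin]))⟩
  | @env sp s₁ s₂ x₁ x₂ cs h ih =>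
    intro s hs hh hr
    simp at hh
    obtain ⟨h1', h2'⟩ := hh; subst h1'; subst h2'
    have hR := rely_head hr rfl
    have ih' := ih s₁ (h3 _ _ hs hR) (by rfl) (rely_tail hr)
    exact ⟨guar_cons (fun hstep => absurd (pstep_ne hstep) (by simp)) ih'.1,
      post_cons ih'.2⟩
  | @act c c' cs hstep h ih =>
    intro s hs hh hr
    simp at hh; subst hh
    obtain ⟨P', s', u⟩ := c'
    have hstep' : PStep (Prog.basic f, s) (P', s') := hstep
    cases hstep'
    have hG : (s, f s) ∈ G := h2 ⟨hs, rfl⟩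
    have htail := V_term (G := G) h4 (h1 hs) _ h rfl (rely_tail hr)
    exact ⟨guar_cons (fun _ => hG) htail.1, post_cons htail.2⟩

theorem sound_nondt {r : Set (S × S)}
    (h1 : pre ⊆ {s | (∀ s', (s, s') ∈ r → s' ∈ pst) ∧ ∃ s', (s, s') ∈ r})
    (h2 : {p : S × S | p.1 ∈ pre ∧ p ∈ r} ⊆ G)
    (h3 : stable pre R) (h4 : stable pst R) :
    ∀ s : S, s ∈ pre → V pstepL progFin (Prog.nondt r) s () R G pst := by
  intro s hs
  suffices h : ∀ w, Comp pstepL w → ∀ s : S, s ∈ pre →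
      w.head? = some (.nondt r, s, ()) → rely R w →
      guarOf pstepL G w ∧ postOf progFin pst w by
    intro w hc hh hr; exact h w hc s hs hh hr
  intro w hc
  induction hc with
  | one c =>
    intro s hs hh hr
    simp at hh; subst hh
    exact ⟨guar_one, post_one (fun hf => absurd hf (by simp [progFin]))⟩
  | @env sp s₁ s₂ x₁ x₂ cs h ih =>
    intro s hs hh hr
    simp at hh
    obtain ⟨h1', h2'⟩ := hh; subst h1'; subst h2'
    have hR := rely_head hr rfl
    have ih' := ih s₁ (h3 _ _ hs hR) (by rfl) (rely_tail hr)
    exact ⟨guar_cons (fun hstep => absurd (pstep_ne hstep) (by simp)) ih'.1,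
      post_cons ih'.2⟩
  | @act c c' cs hstep h ih =>
    intro s hs hh hr
    simp at hh; subst hh
    obtain ⟨P', s', u⟩ := c'
    have hstep' : PStep (Prog.nondt r, s) (P', s') := hstep
    cases hstep' with
    | nondt hrr =>
      have hG : (s, s') ∈ G := h2 ⟨hs, hrr⟩
      have htail := V_term (G := G) h4 ((h1 hs).1 s' hrr) _ h rfl (rely_tail hr)
      exact ⟨guar_cons (fun _ => hG) htail.1, post_cons htail.2⟩

theorem sound_cond {b : Set S} {P₁ P₂ : Prog S}
    (hP1 : ∀ s : S, s ∈ pre ∩ b → V pstepL progFin P₁ s () R G pst)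
    (hP2 : ∀ s : S, s ∈ pre ∩ bᶜ → V pstepL progFin P₂ s () R G pst)
    (h3 : stable pre R) (hid : idRel ⊆ G) :
    ∀ s : S, s ∈ pre → V pstepL progFin (Prog.cond b P₁ P₂) s () R G pst := by
  intro s hs
  suffices h : ∀ w, Comp pstepL w → ∀ s : S, s ∈ pre →
      w.head? = some (.cond b P₁ P₂, s, ()) → rely R w →
      guarOf pstepL G w ∧ postOf progFin pst w by
    intro w hc hh hr; exact h w hc s hs hh hr
  intro w hc
  induction hc with
  | one c =>
    intro s hs hh hr
    simp at hh; subst hh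
    exact ⟨guar_one, post_one (fun hf => absurd hf (by simp [progFin]))⟩
  | @env sp s₁ s₂ x₁ x₂ cs h ih =>
    intro s hs hh hr
    simp at hh
    obtain ⟨h1', h2'⟩ := hh; subst h1'; subst h2'
    have hR := rely_head hr rfl
    have ih' := ih s₁ (h3 _ _ hs hR) (by rfl) (rely_tail hr)
    exact ⟨guar_cons (fun hstep => absurd (pstep_ne hstep) (by simp)) ih'.1,
      post_cons ih'.2⟩
  | @act c c' cs hstep h ih =>
    intro s hs hh hr
    simp at hh; subst hh
    obtain ⟨P', s', u⟩ := c'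
    have hstep' : PStep (Prog.cond b P₁ P₂, s) (P', s') := hstep
    have hG : (s, s) ∈ G := hid rfl
    cases hstep' with
    | condT _ _ hb =>
      have htail := hP1 s ⟨hs, hb⟩ _ h rfl (rely_tail hr)
      exact ⟨guar_cons (fun _ => hG) htail.1, post_cons htail.2⟩
    | condF _ _ hb =>
      have htail := hP2 s ⟨hs, hb⟩ _ h rfl (rely_tail hr)
      exact ⟨guar_cons (fun _ => hG) htail.1, post_cons htail.2⟩

end ProgRules
section ProgRules2
variable {S : Type} {pre pst : Set S} {R G : Set (S × S)}

theorem sound_seq_aux {Q : Prog S} {m : Set S}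
    (hQ : ∀ s : S, s ∈ m → V pstepL progFin Q s () R G pst) :
    ∀ w, Comp pstepL w → ∀ (P : Prog S) (s : S),
      w.head? = some (.seq P Q, s, ()) →
      V pstepL progFin P s () R G m → rely R w →
      guarOf pstepL G w ∧ postOf progFin pst w := by
  intro w hc
  induction hc with
  | one c =>
    intro P s hh hV hr
    simp at hh; subst hh
    exact ⟨guar_one, post_one (fun hf => absurd hf (by simp [progFin]))⟩
  | @env sp s₁ s₂ x₁ x₂ cs h ih =>
    intro P s hh hV hr
    simp at hh
    obtain ⟨h1', h2'⟩ := hh; subst h1'; subst h2'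
    have hR := rely_head hr rfl
    have ih' := ih P s₁ (by rfl) (V_env hV hR) (rely_tail hr)
    exact ⟨guar_cons (fun hstep => absurd (pstep_ne hstep) (by simp)) ih'.1,
      post_cons ih'.2⟩
  | @act c c' cs hstep h ih =>
    intro P s hh hV hr
    simp at hh; subst hh
    obtain ⟨P', s', u⟩ := c'
    have hstep' : PStep (Prog.seq P Q, s) (P', s') := hstep
    cases hstep' with
    | seq1 _ h1 =>
      have hne : P ≠ Prog.term := pstep_ne h1
      have hG : (s, s') ∈ G := V_G (x' := ()) hV h1 hne
      have hm : s' ∈ m := V_post_step (x' := ()) hV h1 hne rfl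
      have htail := hQ s' hm _ h rfl (rely_tail hr)
      exact ⟨guar_cons (fun _ => hG) htail.1, post_cons htail.2⟩
    | seq2 _ h1 hne' =>
      rename_i P₁'
      have hne : P ≠ P₁' := pstep_ne h1
      have hG : (s, s') ∈ G := V_G (x' := ()) hV h1 hne
      have ih' := ih P₁' s' (by rfl) (V_step hV h1 hne) (rely_tail hr)
      exact ⟨guar_cons (fun _ => hG) ih'.1, post_cons ih'.2⟩

theorem sound_seq {P Q : Prog S} {m : Set S}
    (hP : ∀ s : S, s ∈ pre → V pstepL progFin P s () R G m)
    (hQ : ∀ s : S, s ∈ m → V pstepL progFin Q s () R G pst) :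
    ∀ s : S, s ∈ pre → V pstepL progFin (Prog.seq P Q) s () R G pst := by
  intro s hs w hc hh hr
  exact sound_seq_aux hQ w hc P s hh (hP s hs) hr

theorem sound_while {b : Set S} {P : Prog S}
    (hP : ∀ s : S, s ∈ pre ∩ b → V pstepL progFin P s () R G pre)
    (hbc : pre ∩ bᶜ ⊆ pst) (hst1 : stable pre R) (hst2 : stable pst R)
    (hid : idRel ⊆ G) :
    ∀ s : S, s ∈ pre → V pstepL progFin (Prog.while' b P) s () R G pst := by
  have key : ∀ n : ℕ, ∀ w : List (Prog S × S × Unit), w.length ≤ n →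
      Comp pstepL w → rely R w →
      ((∀ s : S, w.head? = some (.while' b P, s, ()) → s ∈ pre →
          guarOf pstepL G w ∧ postOf progFin pst w) ∧
       (∀ (P' : Prog S) (s : S), w.head? = some (.seq P' (.while' b P), s, ()) →
          V pstepL progFin P' s () R G pre →
          guarOf pstepL G w ∧ postOf progFin pst w)) := by
    intro n
    induction n with
    | zero =>
      intro w hlen hc hr
      interval_cases hw : w.length
      · cases hc <;> simp_all
    | succ n ihn =>
      intro w hlen hc hr
      constructor
      · intro s hh hs
        cases hc with
        | one c =>
          simp at hh; subst hh
          exact ⟨guar_one, post_one (fun hf => absurd hf (by simp [progFin]))⟩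
        | @env sp s₁ s₂ x₁ x₂ cs h =>
          simp at hh
          obtain ⟨h1', h2'⟩ := hh; subst h1'; subst h2'
          have hR := rely_head hr rfl
          have hlen' : ((Prog.while' b P, s₁, x₁) :: cs).length ≤ n := by
            simp at hlen ⊢; omega
          have ih' := (ihn _ hlen' h (rely_tail hr)).1 s₁ (by rfl)
            (hst1 _ _ hs hR)
          exact ⟨guar_cons (fun hstep => absurd (pstep_ne hstep) (by simp)) ih'.1,
            post_cons ih'.2⟩
        | @act c c' cs hstep h =>
          simp at hh; subst hh
          obtain ⟨P', s', u⟩ := c'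
          have hlen' : ((P', s', u) :: cs).length ≤ n := by
            simp at hlen ⊢; omega
          have hstep' : PStep (Prog.while' b P, s) (P', s') := hstep
          have hG : (s, s) ∈ G := hid rfl
          cases hstep' with
          | whileT _ hb =>
            have ih' := (ihn _ hlen' h (rely_tail hr)).2 P s (by rfl)
              (hP s ⟨hs, hb⟩)
            exact ⟨guar_cons (fun _ => hG) ih'.1, post_cons ih'.2⟩
          | whileF _ hb =>
            have htail := V_term (G := G) hst2 (hbc ⟨hs, hb⟩) _ h rfl (rely_tail hr)
            exact ⟨guar_cons (fun _ => hG) htail.1, post_cons htail.2⟩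
      · intro P' s hh hV
        cases hc with
        | one c =>
          simp at hh; subst hh
          exact ⟨guar_one, post_one (fun hf => absurd hf (by simp [progFin]))⟩
        | @env sp s₁ s₂ x₁ x₂ cs h =>
          simp at hh
          obtain ⟨h1', h2'⟩ := hh; subst h1'; subst h2'
          have hR := rely_head hr rfl
          have hlen' : ((Prog.seq P' (.while' b P), s₁, x₁) :: cs).length ≤ n := by
            simp at hlen ⊢; omega
          have ih' := (ihn _ hlen' h (rely_tail hr)).2 P' s₁ (by rfl)
            (V_env hV hR)
          exact ⟨guar_cons (fun hstep => absurd (pstep_ne hstep) (by simp)) ih'.1,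
            post_cons ih'.2⟩
        | @act c c' cs hstep h =>
          simp at hh; subst hh
          obtain ⟨P'', s', u⟩ := c'
          have hlen' : ((P'', s', u) :: cs).length ≤ n := by
            simp at hlen ⊢; omega
          have hstep' : PStep (Prog.seq P' (.while' b P), s) (P'', s') := hstep
          cases hstep' with
          | seq1 _ h1 =>
            have hne : P' ≠ Prog.term := pstep_ne h1
            have hG : (s, s') ∈ G := V_G (x' := ()) hV h1 hne
            have hpre : s' ∈ pre := V_post_step (x' := ()) hV h1 hne rfl
            have ih' := (ihn _ hlen' h (rely_tail hr)).1 s' (by rfl) hpre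
            exact ⟨guar_cons (fun _ => hG) ih'.1, post_cons ih'.2⟩
          | seq2 _ h1 hne' =>
            rename_i P₁'
            have hne : P' ≠ P₁' := pstep_ne h1
            have hG : (s, s') ∈ G := V_G (x' := ()) hV h1 hne
            have ih' := (ihn _ hlen' h (rely_tail hr)).2 P₁' s' (by rfl)
              (V_step hV h1 hne)
            exact ⟨guar_cons (fun _ => hG) ih'.1, post_cons ih'.2⟩
  intro s hs w hc hh hr
  exact (key w.length w le_rfl hc hr).1 s hh hs

end ProgRules2
section ProgRules3
variable {S : Type} {pre pst : Set S} {R G : Set (S × S)}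

private def starClaim (c c'' : Prog S × S) : Prop :=
  ∃ w : List (Prog S × S × Unit), Comp pstepL w ∧
    w.head? = some (c.1, c.2, ()) ∧ w.getLast? = some (c''.1, c''.2, ()) ∧
    ∀ R' : Set (S × S), rely R' w

theorem star_comp {c c'' : Prog S × S} (h : PStepStar c c'') : starClaim c c'' := by
  refine PStepStar.rec (motive_1 := fun _ _ _ => True)
    (motive_2 := fun c c'' _ => starClaim c c'')
    ?_ ?_ ?_ ?_ ?_ ?_ ?_ ?_ ?_ ?_ ?_ h
  case refine_10 =>
    intro c
    exact ⟨[(c.1, c.2, ())], Comp.one _, rfl, by simp, fun R' => rely_one⟩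
  case refine_11 =>
    intro c c' c'' h1 h2 _ ih
    obtain ⟨w, hc, hh, hl, hr⟩ := ih
    obtain ⟨P, s⟩ := c; obtain ⟨P', s'⟩ := c'
    refine ⟨(P, s, ()) :: w, ?_, rfl, ?_, ?_⟩
    · match w, hh with
      | _ :: t', rfl => exact Comp.act h1 hc
    · match w, hh with
      | _ :: t', rfl => rw [List.getLast?_cons_cons]; exact hl
    · intro R'
      match w, hh with
      | _ :: t', rfl =>
        refine rely_cons ?_ (hr R')
        intro he
        exact absurd he (pstep_ne h1)
  all_goals intros; trivial

theorem sound_await {b : Set S} {P : Prog S}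
    (hP : ∀ V₀ : S, ∀ s : S, s ∈ pre ∩ b ∩ {V₀} →
      V pstepL progFin P s () idRel Set.univ ({t | (V₀, t) ∈ G} ∩ pst))
    (hst1 : stable pre R) (hst2 : stable pst R) :
    ∀ s : S, s ∈ pre → V pstepL progFin (Prog.await b P) s () R G pst := by
  intro s hs
  suffices h : ∀ w, Comp pstepL w → ∀ s : S, s ∈ pre →
      w.head? = some (.await b P, s, ()) → rely R w →
      guarOf pstepL G w ∧ postOf progFin pst w by
    intro w hc hh hr; exact h w hc s hs hh hr
  intro w hc
  induction hc with
  | one c =>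
    intro s hs hh hr
    simp at hh; subst hh
    exact ⟨guar_one, post_one (fun hf => absurd hf (by simp [progFin]))⟩
  | @env sp s₁ s₂ x₁ x₂ cs h ih =>
    intro s hs hh hr
    simp at hh
    obtain ⟨h1', h2'⟩ := hh; subst h1'; subst h2'
    have hR := rely_head hr rfl
    have ih' := ih s₁ (hst1 _ _ hs hR) (by rfl) (rely_tail hr)
    exact ⟨guar_cons (fun hstep => absurd (pstep_ne hstep) (by simp)) ih'.1,
      post_cons ih'.2⟩
  | @act c c' cs hstep h ih =>
    intro s hs hh hr
    simp at hh; subst hh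
    obtain ⟨P', s', u⟩ := c'
    have hstep' : PStep (Prog.await b P, s) (P', s') := hstep
    cases hstep' with
    | await hb hstar =>
      obtain ⟨w₀, hc₀, hh₀, hl₀, hr₀⟩ := star_comp hstar
      have hVP := hP s s ⟨⟨hs, hb⟩, rfl⟩ w₀ hc₀ hh₀ (hr₀ idRel)
      have hpost := hVP.2 _ hl₀ rfl
      have hG : (s, s') ∈ G := hpost.1
      have htail := V_term (G := G) hst2 hpost.2 _ h rfl (rely_tail hr)
      exact ⟨guar_cons (fun _ => hG) htail.1, post_cons htail.2⟩

end ProgRules3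
/-! ### Soundness of the event rules -/

section EvtRules
variable {L S K : Type} [DecidableEq K] {pre pst : Set S} {R G : Set (S × S)}

theorem sound_anony_aux :
    ∀ w : List (EConf L S K), Comp estepAny w →
      ∀ (P : Prog S) (s : S) (x : EvtCtx L S K),
        w.head? = some (.anony P, s, x) →
        V pstepL progFin P s () R G pst → rely R w →
        guarOf estepAny G w ∧ postOf evtFin pst w := by
  intro w hc
  induction hc with
  | one c =>
    intro P s x hh hV hr
    simp at hh; subst hh
    refine ⟨guar_one, post_one ?_⟩
    intro hf
    injection hf with h'
    exact V_sing hV h'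
  | @env sp s₁ s₂ x₁ x₂ cs h ih =>
    intro P s x hh hV hr
    simp at hh
    obtain ⟨h1', h2', h3'⟩ := hh; subst h1'; subst h2'; subst h3'
    have hR := rely_head hr rfl
    have ih' := ih P s₁ x₁ (by rfl) (V_env hV hR) (rely_tail hr)
    exact ⟨guar_cons (fun ⟨l, hstep⟩ => absurd (estep_ne hstep) (by simp)) ih'.1,
      post_cons ih'.2⟩
  | @act c c' cs hstep h ih =>
    intro P s x hh hV hr
    simp at hh; subst hh
    obtain ⟨e', s', x'⟩ := c'
    obtain ⟨l, hstep'⟩ := hstep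
    cases hstep' with
    | anony _ κ hp =>
      rename_i P'
      have hne : P ≠ P' := pstep_ne hp
      have hG : (s, s') ∈ G := V_G (x' := ()) hV hp hne
      have ih' := ih P' s' x (by rfl) (V_step (x' := ()) hV hp hne) (rely_tail hr)
      exact ⟨guar_cons (fun _ => hG) ih'.1, post_cons ih'.2⟩

theorem sound_anony {P : Prog S}
    (hP : ∀ s : S, s ∈ pre → V pstepL progFin P s () R G pst) :
    ∀ (s : S) (x : EvtCtx L S K), s ∈ pre →
      V estepAny evtFin (Event.anony P) s x R G pst := by
  intro s x hs w hc hh hr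
  exact sound_anony_aux w hc P s x hh (hP s hs) hr

theorem sound_basicEvt {α : EvtSpec L S}
    (hbody : ∀ s : S, s ∈ pre ∩ α.guard → V pstepL progFin α.body s () R G pst)
    (hst : stable pre R) (hid : idRel ⊆ G) :
    ∀ (s : S) (x : EvtCtx L S K), s ∈ pre →
      V estepAny evtFin (Event.basic α) s x R G pst := by
  suffices h : ∀ w : List (EConf L S K), Comp estepAny w →
      ∀ (s : S) (x : EvtCtx L S K), s ∈ pre →
        w.head? = some (.basic α, s, x) → rely R w →
        guarOf estepAny G w ∧ postOf evtFin pst w by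
    intro s x hs w hc hh hr; exact h w hc s x hs hh hr
  intro w hc
  induction hc with
  | one c =>
    intro s x hs hh hr
    simp at hh; subst hh
    exact ⟨guar_one, post_one (fun hf => by cases hf)⟩
  | @env sp s₁ s₂ x₁ x₂ cs h ih =>
    intro s x hs hh hr
    simp at hh
    obtain ⟨h1', h2', h3'⟩ := hh; subst h1'; subst h2'; subst h3'
    have hR := rely_head hr rfl
    have ih' := ih s₁ x₁ (hst _ _ hs hR) (by rfl) (rely_tail hr)
    exact ⟨guar_cons (fun ⟨l, hstep⟩ => absurd (estep_ne hstep) (by simp)) ih'.1,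
      post_cons ih'.2⟩
  | @act c c' cs hstep h ih =>
    intro s x hs hh hr
    simp at hh; subst hh
    obtain ⟨e', s', x'⟩ := c'
    obtain ⟨l, hstep'⟩ := hstep
    cases hstep' with
    | basic _ _ κ hg =>
      have hG : (s, s) ∈ G := hid rfl
      have htail := sound_anony_aux _ h α.body s
        (Function.update x κ (Event.basic α)) (by rfl)
        (hbody s ⟨hs, hg⟩) (rely_tail hr)
      exact ⟨guar_cons (fun _ => hG) htail.1, post_cons htail.2⟩

end EvtRules
/-! ### Soundness of the event-system rules -/

section ESysRules
variable {L S K : Type} [DecidableEq K] {pre pst : Set S} {R G : Set (S × S)}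

theorem esys_post_trivial {w : List (ESConf L S K)} : postOf esysFin pst w :=
  fun _ _ hf => hf.elim

theorem sound_evtSeq_aux {𝒮 : EvtSys L S} {m : Set S}
    (h𝒮 : ∀ (s : S) (x : EvtCtx L S K), s ∈ m →
      V esstepAny esysFin 𝒮 s x R G pst) :
    ∀ w : List (ESConf L S K), Comp esstepAny w →
      ∀ (e : Event L S) (s : S) (x : EvtCtx L S K),
        w.head? = some (.seq e 𝒮, s, x) →
        V estepAny evtFin e s x R G m → rely R w →
        guarOf esstepAny G w ∧ postOf esysFin pst w := by
  intro w hc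
  induction hc with
  | one c =>
    intro e s x hh hV hr
    exact ⟨guar_one, esys_post_trivial⟩
  | @env sp s₁ s₂ x₁ x₂ cs h ih =>
    intro e s x hh hV hr
    simp at hh
    obtain ⟨h1', h2', h3'⟩ := hh; subst h1'; subst h2'; subst h3'
    have hR := rely_head hr rfl
    have ih' := ih e s₁ x₁ (by rfl) (V_env hV hR) (rely_tail hr)
    exact ⟨guar_cons (fun ⟨l, hstep⟩ => absurd (esstep_ne hstep) (by simp)) ih'.1,
      esys_post_trivial⟩
  | @act c c' cs hstep h ih =>
    intro e s x hh hV hr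
    simp at hh; subst hh
    obtain ⟨es', s', x'⟩ := c'
    obtain ⟨l, hstep'⟩ := hstep
    cases hstep' with
    | seq1 _ he hne' =>
      rename_i e'
      have hne : e ≠ e' := estep_ne he
      have hG : (s, s') ∈ G := V_G hV ⟨l, he⟩ hne
      have ih' := ih e' s' x' (by rfl) (V_step hV ⟨l, he⟩ hne) (rely_tail hr)
      exact ⟨guar_cons (fun _ => hG) ih'.1, esys_post_trivial⟩
    | seq2 _ he =>
      have hne : e ≠ Event.anony Prog.term := estep_ne he
      have hG : (s, s') ∈ G := V_G hV ⟨l, he⟩ hne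
      have hm : s' ∈ m := V_post_step hV ⟨l, he⟩ hne rfl
      have htail := h𝒮 s' x' hm _ h rfl (rely_tail hr)
      exact ⟨guar_cons (fun _ => hG) htail.1, esys_post_trivial⟩

theorem sound_evtSeq {e : Event L S} {𝒮 : EvtSys L S} {m : Set S}
    (he : ∀ (s : S) (x : EvtCtx L S K), s ∈ pre → V estepAny evtFin e s x R G m)
    (h𝒮 : ∀ (s : S) (x : EvtCtx L S K), s ∈ m → V esstepAny esysFin 𝒮 s x R G pst) :
    ∀ (s : S) (x : EvtCtx L S K), s ∈ pre →
      V esstepAny esysFin (EvtSys.seq e 𝒮) s x R G pst := by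
  intro s x hs w hc hh hr
  exact sound_evtSeq_aux h𝒮 w hc e s x hh (he s x hs) hr

end ESysRules
section EvtSetRule
variable {L S K : Type} [DecidableEq K] {pre pst : Set S} {R G : Set (S × S)}

theorem sound_evtSet {n : ℕ} {es : Fin (n + 1) → Event L S}
    {pres psts : Fin (n + 1) → Set S} {Rs Gs : Fin (n + 1) → Set (S × S)}
    (hfam : ∀ i, ∀ (s : S) (x : EvtCtx L S K), s ∈ pres i →
      V estepAny evtFin (es i) s x (Rs i) (Gs i) (psts i))
    (hpp : ∀ i j, psts i ⊆ pres j)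
    (hpre : ∀ i, pre ⊆ pres i) (hpst : ∀ i, psts i ⊆ pst)
    (hRs : ∀ i, R ⊆ Rs i) (hGs : ∀ i, Gs i ⊆ G)
    (hstp : stable pre R) (hid : idRel ⊆ G) :
    ∀ (s : S) (x : EvtCtx L S K), s ∈ pre →
      V esstepAny esysFin (EvtSys.set n es) s x R G pst := by
  have key : ∀ N : ℕ, ∀ w : List (ESConf L S K), w.length ≤ N →
      Comp esstepAny w → rely R w →
      ((∀ (s : S) (x : EvtCtx L S K),
          w.head? = some (.set n es, s, x) →
          (∀ j, V estepAny evtFin (es j) s x (Rs j) (Gs j) (psts j)) →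
          guarOf esstepAny G w) ∧
       (∀ (i : Fin (n + 1)) (e' : Event L S) (s : S) (x : EvtCtx L S K),
          w.head? = some (.seq e' (.set n es), s, x) →
          V estepAny evtFin e' s x (Rs i) (Gs i) (psts i) →
          guarOf esstepAny G w)) := by
    intro N
    induction N with
    | zero =>
      intro w hlen hc hr
      cases hc <;> simp_all
    | succ N ihn =>
      intro w hlen hc hr
      constructor
      · intro s x hh hVs
        cases hc with
        | one c => exact guar_one
        | @env sp s₁ s₂ x₁ x₂ cs h =>
          simp at hh
          obtain ⟨h1', h2', h3'⟩ := hh; subst h1'; subst h2'; subst h3'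
          have hR := rely_head hr rfl
          have hlen' : ((EvtSys.set n es, s₁, x₁) :: cs).length ≤ N := by
            simp at hlen ⊢; omega
          have ih' := (ihn _ hlen' h (rely_tail hr)).1 s₁ x₁ (by rfl)
            (fun j => V_env (hVs j) (hRs j hR))
          exact guar_cons (fun ⟨l, hstep⟩ => absurd (esstep_ne hstep) (by simp)) ih'
        | @act c c' cs hstep h =>
          simp at hh; subst hh
          obtain ⟨es', s', x'⟩ := c'
          obtain ⟨l, hstep'⟩ := hstep
          have hlen' : ((es', s', x') :: cs).length ≤ N := by
            simp at hlen ⊢; omega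
          cases hstep' with
          | set i he =>
            rename_i e'' κ
            have hG : (s, s') ∈ G := hGs i (V_G (hVs i) ⟨(.evt (es i), κ), he⟩
              (estep_ne he))
            have hVi := V_step (hVs i) ⟨(.evt (es i), κ), he⟩ (estep_ne he)
            have ih' := (ihn _ hlen' h (rely_tail hr)).2 i e'' s' x' (by rfl) hVi
            exact guar_cons (fun _ => hG) ih'
      · intro i e' s x hh hV
        cases hc with
        | one c => exact guar_one
        | @env sp s₁ s₂ x₁ x₂ cs h =>
          simp at hh
          obtain ⟨h1', h2', h3'⟩ := hh; subst h1'; subst h2'; subst h3'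
          have hR := rely_head hr rfl
          have hlen' : ((EvtSys.seq e' (.set n es), s₁, x₁) :: cs).length ≤ N := by
            simp at hlen ⊢; omega
          have ih' := (ihn _ hlen' h (rely_tail hr)).2 i e' s₁ x₁ (by rfl)
            (V_env hV (hRs i hR))
          exact guar_cons (fun ⟨l, hstep⟩ => absurd (esstep_ne hstep) (by simp)) ih'
        | @act c c' cs hstep h =>
          simp at hh; subst hh
          obtain ⟨es', s', x'⟩ := c'
          obtain ⟨l, hstep'⟩ := hstep
          have hlen' : ((es', s', x') :: cs).length ≤ N := by
            simp at hlen ⊢; omega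
          cases hstep' with
          | seq1 _ he hne' =>
            rename_i e''
            have hne : e' ≠ e'' := estep_ne he
            have hG : (s, s') ∈ G := hGs i (V_G hV ⟨l, he⟩ hne)
            have ih' := (ihn _ hlen' h (rely_tail hr)).2 i e'' s' x' (by rfl)
              (V_step hV ⟨l, he⟩ hne)
            exact guar_cons (fun _ => hG) ih'
          | seq2 _ he =>
            have hne : e' ≠ Event.anony Prog.term := estep_ne he
            have hG : (s, s') ∈ G := hGs i (V_G hV ⟨l, he⟩ hne)
            have hm : s' ∈ psts i := V_post_step hV ⟨l, he⟩ hne rfl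
            have ih' := (ihn _ hlen' h (rely_tail hr)).1 s' x' (by rfl)
              (fun j => hfam j s' x' (hpp i j hm))
            exact guar_cons (fun _ => hG) ih'
  intro s x hs w hc hh hr
  refine ⟨(key w.length w le_rfl hc hr).1 s x hh
    (fun j => hfam j s x (hpre j hs)), esys_post_trivial⟩

end EvtSetRule
/-! ### Soundness of the parallel rule -/

section ParRule
variable {L S K : Type} [DecidableEq K]

/-- Projection of a parallel configuration to component `κ`. -/
def projC (κ : K) (c : PConf L S K) : ESConf L S K := (c.1 κ, c.2)

theorem proj_comp {w : List (PConf L S K)} (hc : Comp pesstepAny w) (κ : K) :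
    Comp esstepAny (w.map (projC κ)) := by
  induction hc with
  | one c => exact Comp.one _
  | @env sp s₁ s₂ x₁ x₂ cs h ih => exact Comp.env ih
  | @act c c' cs hs h ih =>
    obtain ⟨⟨t, κ₁⟩, hstep⟩ := hs
    cases hstep with
    | @par ps κ₁ t s s' x x' es' hes =>
      by_cases hκ : κ = κ₁
      · subst hκ
        simp only [List.map_cons, projC, Function.update_self] at ih ⊢
        exact Comp.act ⟨(t, κ), hes⟩ ih
      · simp only [List.map_cons, projC, Function.update_of_ne hκ] at ih ⊢
        exact Comp.env ih

theorem sound_par {ps : PES L S K} {pre pst : Set S} {R G : Set (S × S)}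
    {pres psts : K → Set S} {Rs Gs : K → Set (S × S)}
    (hIH : ∀ κ, esysValid (K := K) (ps κ) (pres κ) (Rs κ) (Gs κ) (psts κ))
    (hpre : ∀ κ, pre ⊆ pres κ) (hpst : ∀ κ, psts κ ⊆ pst)
    (hGs : ∀ κ, Gs κ ⊆ G) (hRs : ∀ κ, R ⊆ Rs κ)
    (hcompat : ∀ κ κ', κ ≠ κ' → Gs κ ⊆ Rs κ') :
    pesValid ps pre R G pst := by
  rintro s x w ⟨⟨hc, hh⟩, hpre', henv⟩
  have hs : s ∈ pre := hpre' _ hh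
  -- main claim: every action transition at κ₁ is in Gs κ₁
  have hmain : ∀ j, ∀ c c' : PConf L S K, w[j]? = some c → w[j + 1]? = some c' →
      ∀ (t : Act L S) (κ₁ : K), PESStep c (t, κ₁) c' → (c.2.1, c'.2.1) ∈ Gs κ₁ := by
    intro j
    induction j using Nat.strong_induction_on with
    | _ j ihj =>
    intro c c' hj hj1 t κ₁ hstep
    have hjlen : j + 1 < w.length := (List.getElem?_eq_some_iff.mp hj1).1
    set u := (w.take (j + 2)).map (projC κ₁) with hu
    have hulen : u.length = j + 2 := by
      simp [hu]; omega
    have hui : ∀ i, i < j + 2 → u[i]? = (w[i]?).map (projC κ₁) := by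
      intro i hi
      simp [hu, List.getElem?_take, hi]
    have hcu : Comp esstepAny u := proj_comp (comp_take hc (j + 1)) κ₁
    have hw0 : w[0]? = some (ps, s, x) := by
      cases w with
      | nil => simp at hh
      | cons a w' => simpa using hh
    have hhu : u.head? = some (ps κ₁, s, x) := by
      have h0 : u[0]? = some (ps κ₁, s, x) := by
        rw [hui 0 (by omega), hw0]; rfl
      cases hu2 : u with
      | nil => rw [hu2] at h0; simp at h0
      | cons a u' =>
        rw [hu2] at h0
        simp at h0 ⊢
        exact h0
    have hassume : u ∈ Assum (pres κ₁) (Rs κ₁) := by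
      constructor
      · intro d hd
        rw [hhu] at hd
        injection hd with hd'
        subst hd'
        exact hpre κ₁ hs
      · intro i d d' hi hi1 hENV
        have hi1len : i + 1 < u.length := (List.getElem?_eq_some_iff.mp hi1).1
        have hilt : i + 1 ≤ j + 1 := by omega
        rw [hui i (by omega)] at hi
        rw [hui (i + 1) (by omega)] at hi1
        obtain ⟨a, ha, hda⟩ : ∃ a, w[i]? = some a ∧ projC κ₁ a = d := by
          cases hwa : w[i]? with
          | none => rw [hwa] at hi; simp at hi
          | some a => rw [hwa] at hi; simp at hi; exact ⟨a, rfl, hi⟩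
        obtain ⟨a', ha', hda'⟩ : ∃ a', w[i + 1]? = some a' ∧ projC κ₁ a' = d' := by
          cases hwa : w[i + 1]? with
          | none => rw [hwa] at hi1; simp at hi1
          | some a' => rw [hwa] at hi1; simp at hi1; exact ⟨a', rfl, hi1⟩
        subst hda; subst hda'
        -- case i = j : our own step, spec at κ₁ changes, contradiction with EnvTr
        by_cases hij : i = j
        · subst hij
          rw [ha] at hj; injection hj with hj'
          rw [ha'] at hj1; injection hj1 with hj1'
          subst hj'; subst hj1'
          exfalso
          cases hstep with
          | @par ps₂ κ₁ t s₂ s₂' x₂ x₂' es' hes =>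
            have : ps₂ κ₁ = es' := by
              have := hENV
              simp only [EnvTr, projC] at this
              simpa using this
            exact esstep_ne hes this
        · have hilt' : i < j := by omega
          rcases comp_pairs hc i a a' ha ha' with hE | hA
          · exact hRs κ₁ (henv i a a' ha ha' hE)
          · obtain ⟨⟨t', κ'⟩, hstep'⟩ := hA
            by_cases hκ : κ' = κ₁
            · subst hκ
              exfalso
              cases hstep' with
              | @par ps₂ κ' t₂ s₂ s₂' x₂ x₂' es' hes =>
                have : ps₂ κ' = es' := by
                  simp only [EnvTr, projC] at hENV
                  simpa using hENV
                exact esstep_ne hes this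
            · exact hcompat κ' κ₁ hκ (ihj i hilt' a a' ha ha' t' κ' hstep')
    have hcommit := hIH κ₁ s x ⟨⟨hcu, hhu⟩, hassume⟩
    -- extract the guarantee at position j
    have huj : u[j]? = some (projC κ₁ c) := by
      rw [hui j (by omega), hj]; rfl
    have huj1 : u[j + 1]? = some (projC κ₁ c') := by
      rw [hui (j + 1) (by omega), hj1]; rfl
    have hstepu : esstepAny (projC κ₁ c) (projC κ₁ c') := by
      cases hstep with
      | @par ps₂ κ₁ t s₂ s₂' x₂ x₂' es' hes =>
        refine ⟨(t, κ₁), ?_⟩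
        have : projC κ₁ (Function.update ps₂ κ₁ es', s₂', x₂') = (es', s₂', x₂') := by
          simp [projC]
        rw [this]
        exact hes
    exact hcommit.1 j _ _ huj huj1 hstepu
  refine ⟨?_, fun c _ hf => hf.elim⟩
  intro i c c' hi hi1 hstep
  obtain ⟨⟨t, κ₁⟩, hstep'⟩ := hstep
  exact hGs κ₁ (hmain i c c' hi hi1 t κ₁ hstep')

end ParRule
/-! ### Monotonicity of assumption and commitment -/

section Mono
variable {σ S X : Type} {step : σ × S × X → σ × S × X → Prop} {fin : σ → Prop}

theorem assum_mono {pre pre' : Set S} {R R' : Set (S × S)}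
    (hpre : pre ⊆ pre') (hR : R ⊆ R') :
    (Assum pre R : Set (List (σ × S × X))) ⊆ Assum pre' R' := by
  rintro w ⟨h1, h2⟩
  exact ⟨fun c hc => hpre (h1 c hc), fun i c c' hi hi1 he => hR (h2 i c c' hi hi1 he)⟩

theorem commit_mono {G G' : Set (S × S)} {pst pst' : Set S}
    (hG : G' ⊆ G) (hpst : pst' ⊆ pst) :
    Commit step fin G' pst' ⊆ Commit step fin G pst := by
  rintro w ⟨h1, h2⟩
  exact ⟨fun i c c' hi hi1 hs => hG (h1 i c c' hi hi1 hs),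
    fun c hl hf => hpst (h2 c hl hf)⟩

end Mono
theorem rg_soundness_aux {L S K : Type} [DecidableEq K]
    (sp : Spec L S K) (pre pst : Set S) (R G : Set (S × S))
    (h : RGDeriv sp pre R G pst) :
    RGValid sp pre R G pst := by
  induction h with
  | basic h1 h2 h3 h4 =>
    exact progV_to_valid (sound_basic h1 h2 h3 h4)
  | seq h1 h2 ih1 ih2 =>
    exact progV_to_valid (sound_seq (progValid_to_V ih1) (progValid_to_V ih2))
  | cond h1 h2 h3 h4 ih1 ih2 =>
    exact progV_to_valid (sound_cond (progValid_to_V ih1) (progValid_to_V ih2) h3 h4)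
  | whileR h1 h2 h3 h4 h5 ih =>
    exact progV_to_valid (sound_while (progValid_to_V ih) h2 h3 h4 h5)
  | awaitR h1 h2 h3 ih =>
    exact progV_to_valid
      (sound_await (fun V₀ => progValid_to_V (ih V₀)) h2 h3)
  | nondt h1 h2 h3 h4 =>
    exact progV_to_valid (sound_nondt h1 h2 h3 h4)
  | @conseq sp pre pre' pst pst' R R' G G' hnp hpre hR hG hpst hd ih =>
    cases sp with
    | prog P =>
      intro s w hw
      exact commit_mono hG hpst (ih s ⟨hw.1, assum_mono hpre hR hw.2⟩)
    | evt e =>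
      intro s x w hw
      exact commit_mono hG hpst (ih s x ⟨hw.1, assum_mono hpre hR hw.2⟩)
    | esys es =>
      intro s x w hw
      exact commit_mono hG hpst (ih s x ⟨hw.1, assum_mono hpre hR hw.2⟩)
    | pes ps =>
      intro s x w hw
      exact commit_mono hG hpst (ih s x ⟨hw.1, assum_mono hpre hR hw.2⟩)
  | unPre h1 h2 ih1 ih2 =>
    exact progV_to_valid (fun s hs =>
      hs.elim (fun h => progValid_to_V ih1 s h) (fun h => progValid_to_V ih2 s h))
  | intPost h1 h2 ih1 ih2 =>
    refine progV_to_valid (fun s hs w hc hh hr => ?_)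
    have a := progValid_to_V ih1 s hs w hc hh hr
    have b := progValid_to_V ih2 s hs w hc hh hr
    exact ⟨a.1, fun c hl hf => ⟨a.2 c hl hf, b.2 c hl hf⟩⟩
  | univPre h ih =>
    exact progV_to_valid (fun s hs => progValid_to_V (ih s hs) s rfl)
  | emptyPre =>
    exact progV_to_valid (fun s hs => hs.elim)
  | inner h ih =>
    exact V_to_valid (sound_anony (progValid_to_V ih))
  | basicEvt h1 h2 h3 ih =>
    exact V_to_valid (sound_basicEvt (progValid_to_V ih) h2 h3)
  | evtSeq h1 h2 ih1 ih2 =>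
    exact V_to_valid (sound_evtSeq (valid_to_V ih1) (valid_to_V ih2))
  | evtSet h1 h2 h3 h4 h5 h6 h7 h8 ih =>
    exact V_to_valid
      (sound_evtSet (fun i => valid_to_V (ih i)) h2 h3 h4 h5 h6 h7 h8)
  | par h1 h2 h3 h4 h5 h6 ih =>
    exact sound_par (fun κ => ih κ) h2 h3 h4 h5 h6

/-- **Soundness of the PiCore rely-guarantee proof system**: every specification
(program, event, event system, or parallel event system) derivable in the proof
system is valid. -/
theorem rg_proof_system_soundness {L S K : Type} [DecidableEq K]
    (sp : Spec L S K) (pre pst : Set S) (R G : Set (S × S))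
    (h : RGDeriv sp pre R G pst) :
    RGValid sp pre R G pst :=
  rg_soundness_aux sp pre pst R G h

end PiCore
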